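/- There exists a group homomorphism ρ' : Γ → PSL(2,ℂ) whose image is contained in PSL(2,ℝ), such that ρ'(q₆) = 1, ρ'(qᵢ) ≠ 1 for all 1 ≤ i ≤ 5, and ρ' ∘ ι : Γ₂ → PSL(2,ℂ) is non-elementary. (In particular, pentagon representations exist.) -/

import Mathlib

/- Common setup: PSL(2,ℂ), its action on ℙ¹(ℂ), loxodromic/parabolic/elliptic elements,
elementary subgroups, surface groups, the pentagon group Γ and the embedding ι. -/

noncomputable section

open Matrix

/-- `SL(2,ℂ)`. -/
abbrev SL2C : Type := Matrix.SpecialLinearGroup (Fin 2) ℂ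

instance : TopologicalSpace SL2C := instTopologicalSpaceSubtype

/-- `PSL(2,ℂ)`, the quotient of `SL(2,ℂ)` by its center `{±I}`. -/
abbrev PSL2C : Type := SL2C ⧸ Subgroup.center SL2C

/-- The quotient map `SL(2,ℂ) → PSL(2,ℂ)`. -/
def projPSL : SL2C →* PSL2C := QuotientGroup.mk' (Subgroup.center SL2C)

/-- The complex projective line `ℙ¹(ℂ)`. -/
abbrev P1 : Type := Projectivization ℂ (Fin 2 → ℂ)

/-- The square of the trace, well defined on `PSL(2,ℂ)`. -/
def trSq (g : PSL2C) : ℂ :=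
  (Matrix.trace ((Quotient.out g : SL2C) : Matrix (Fin 2) (Fin 2) ℂ)) ^ 2

/-- `g` is loxodromic iff `tr² g` is not a real number in `[0,4]`. -/
def IsLoxodromic (g : PSL2C) : Prop := ¬ ∃ r : ℝ, 0 ≤ r ∧ r ≤ 4 ∧ trSq g = (r : ℂ)

/-- `g` is parabolic iff `g ≠ 1` and `tr² g = 4`. -/
def IsParabolic (g : PSL2C) : Prop := g ≠ 1 ∧ trSq g = 4

/-- `g` is elliptic iff `g ≠ 1` and `tr² g` is a real number in `[0,4)`. -/
def IsElliptic (g : PSL2C) : Prop := g ≠ 1 ∧ ∃ r : ℝ, 0 ≤ r ∧ r < 4 ∧ trSq g = (r : ℂ)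

lemma sl2_toLin'_injective (g : SL2C) :
    Function.Injective (Matrix.toLin' (g : Matrix (Fin 2) (Fin 2) ℂ)) := by
  intro v w h
  have h2 : Matrix.toLin' ((g⁻¹ : SL2C) : Matrix (Fin 2) (Fin 2) ℂ)
      (Matrix.toLin' ((g : SL2C) : Matrix (Fin 2) (Fin 2) ℂ) v) =
      Matrix.toLin' ((g⁻¹ : SL2C) : Matrix (Fin 2) (Fin 2) ℂ)
      (Matrix.toLin' ((g : SL2C) : Matrix (Fin 2) (Fin 2) ℂ) w) := by rw [h]
  rwa [← Matrix.toLin'_mul_apply, ← Matrix.toLin'_mul_apply,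
    ← Matrix.SpecialLinearGroup.coe_mul, inv_mul_cancel,
    Matrix.SpecialLinearGroup.coe_one, Matrix.toLin'_one, LinearMap.id_apply,
    LinearMap.id_apply] at h2

/-- The action of `PSL(2,ℂ)` on `ℙ¹(ℂ)` by Möbius transformations (independent of the
choice of representative, since the center acts trivially on lines). -/
def pslAct (g : PSL2C) (x : P1) : P1 :=
  Projectivization.map (Matrix.toLin' ((Quotient.out g : SL2C) : Matrix (Fin 2) (Fin 2) ℂ))
    (sl2_toLin'_injective _) x

/-- A subgroup of `PSL(2,ℂ)` is elementary if it has a nonempty invariant subset of `ℙ¹(ℂ)`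
with at most two elements, or its closure is compact. -/
def IsElementarySubgroup (G : Subgroup PSL2C) : Prop :=
  (∃ S : Set P1, S.Nonempty ∧ S.Finite ∧ S.ncard ≤ 2 ∧ ∀ g ∈ G, pslAct g '' S = S) ∨
    IsCompact (closure (G : Set PSL2C))

/-- A homomorphism to `PSL(2,ℂ)` is non-elementary if its image is non-elementary. -/
def IsNonElem {H : Type*} [Group H] (ρ : H →* PSL2C) : Prop :=
  ¬ IsElementarySubgroup ρ.range

/-- `g` sends a fixed point of `h` to the other one. -/
def SendsFixedToOther (g h : PSL2C) : Prop :=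
  ∃ p q : P1, p ≠ q ∧ pslAct h p = p ∧ pslAct h q = q ∧ (pslAct g p = q ∨ pslAct g q = p)

/-- `g` interchanges the two fixed points of `h`. -/
def InterchangesFixed (g h : PSL2C) : Prop :=
  ∃ p q : P1, p ≠ q ∧ pslAct h p = p ∧ pslAct h q = q ∧ pslAct g p = q ∧ pslAct g q = p

/-- `PSL(2,ℝ)` as a subgroup of `PSL(2,ℂ)`: the image of `SL(2,ℝ)`. -/
def PSL2R : Subgroup PSL2C :=
  (projPSL.comp (Matrix.SpecialLinearGroup.map (n := Fin 2) Complex.ofRealHom)).range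

/-- `γ₁, γ₂` generate a rank-two Schottky group: the induced map from the free group `F₂` is
injective, with discrete image, all of whose nontrivial elements are loxodromic. -/
def GeneratesSchottky (γ₁ γ₂ : PSL2C) : Prop :=
  Function.Injective (FreeGroup.lift ![γ₁, γ₂] : FreeGroup (Fin 2) →* PSL2C) ∧
    DiscreteTopology ((FreeGroup.lift ![γ₁, γ₂] : FreeGroup (Fin 2) →* PSL2C).range) ∧
    ∀ g ∈ (FreeGroup.lift ![γ₁, γ₂] : FreeGroup (Fin 2) →* PSL2C).range, g ≠ 1 → IsLoxodromic g

/-- The commutator `[x,y] = y⁻¹x⁻¹yx` in a free group. -/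
def commF {α : Type*} (x y : FreeGroup α) : FreeGroup α := y⁻¹ * x⁻¹ * y * x

/-- The surface relator `[a_g,b_g]⋯[a₁,b₁]`. -/
def surfaceRel (g : ℕ) : FreeGroup (Fin g × Bool) :=
  (((List.finRange g).reverse).map
    (fun i => commF (FreeGroup.of (i, false)) (FreeGroup.of (i, true)))).prod

/-- The genus-`g` surface group `Γ_g`. -/
abbrev SurfaceGroup (g : ℕ) : Type :=
  PresentedGroup ({surfaceRel g} : Set (FreeGroup (Fin g × Bool)))

/-- The generator `a_{i+1}` of `Γ_g`. -/
def sgA (g : ℕ) (i : Fin g) : SurfaceGroup g := PresentedGroup.of (i, false)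

/-- The generator `b_{i+1}` of `Γ_g`. -/
def sgB (g : ℕ) (i : Fin g) : SurfaceGroup g := PresentedGroup.of (i, true)

/-- The genus-2 surface group `Γ₂`. -/
abbrev Gamma2 : Type := SurfaceGroup 2
def a1 : Gamma2 := sgA 2 0
def b1 : Gamma2 := sgB 2 0
def a2 : Gamma2 := sgA 2 1
def b2 : Gamma2 := sgB 2 1

/-- Relations for the group `Γ = ⟨q₁,…,q₆ ∣ qᵢ² = 1, q₁q₂q₃q₄q₅q₆ = 1⟩`. -/
def pentagonRels : Set (FreeGroup (Fin 6)) :=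
  (Set.range fun i : Fin 6 => FreeGroup.of i * FreeGroup.of i) ∪
    {((List.finRange 6).map FreeGroup.of).prod}

/-- The group `Γ = ⟨q₁,…,q₆ ∣ qᵢ² = 1, q₁q₂q₃q₄q₅q₆ = 1⟩`. -/
abbrev GammaP : Type := PresentedGroup pentagonRels

/-- The generator `q_{i+1}` of `Γ`. -/
def qgen (i : Fin 6) : GammaP := PresentedGroup.of i

lemma qgen_mul_self (i : Fin 6) : qgen i * qgen i = 1 := by
  have hmem : FreeGroup.of i * FreeGroup.of i ∈ pentagonRels :=
    Set.mem_union_left _ ⟨i, rfl⟩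
  have h : (PresentedGroup.mk pentagonRels (FreeGroup.of i * FreeGroup.of i)) = 1 :=
    (QuotientGroup.eq_one_iff _).mpr (Subgroup.subset_normalClosure hmem)
  rw [_root_.map_mul] at h
  exact h

lemma qgen_prod : qgen 0 * (qgen 1 * (qgen 2 * (qgen 3 * (qgen 4 * qgen 5)))) = 1 := by
  have hmem : ((List.finRange 6).map FreeGroup.of).prod ∈ pentagonRels :=
    Set.mem_union_right _ rfl
  have h : (PresentedGroup.mk pentagonRels (((List.finRange 6).map FreeGroup.of).prod)) = 1 :=
    (QuotientGroup.eq_one_iff _).mpr (Subgroup.subset_normalClosure hmem)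
  have h6 : List.finRange 6 = [0, 1, 2, 3, 4, 5] := by decide
  rw [h6] at h
  simp only [List.map_cons, List.map_nil, List.prod_cons, List.prod_nil, mul_one,
    _root_.map_mul] at h
  exact h

lemma pent_helper {G : Type*} [Group G] (x : Fin 6 → G) (hx : ∀ i, x i * x i = 1)
    (hp : x 0 * (x 1 * (x 2 * (x 3 * (x 4 * x 5)))) = 1) :
    (x 4 * x 5)⁻¹ * (x 4 * x 3)⁻¹ * (x 4 * x 5) * (x 4 * x 3) *
      ((x 1 * x 2)⁻¹ * (x 1 * x 0)⁻¹ * (x 1 * x 2) * (x 1 * x 0)) = 1 := by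
  have hinv : ∀ i, (x i)⁻¹ = x i := fun i => inv_eq_of_mul_eq_one_right (hx i)
  have hrev : x 5 * (x 4 * (x 3 * (x 2 * (x 1 * x 0)))) = 1 := by
    have h := congrArg (·⁻¹) hp
    simpa [_root_.mul_inv_rev, hinv, mul_assoc] using h
  have key : ∀ (i : Fin 6) (t : G), x i * (x i * t) = t := fun i t => by
    rw [← mul_assoc, hx, one_mul]
  have key2 : ∀ t : G, x 5 * (x 4 * (x 3 * (x 2 * (x 1 * (x 0 * t))))) = t := fun t => by
    calc x 5 * (x 4 * (x 3 * (x 2 * (x 1 * (x 0 * t)))))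
        = (x 5 * (x 4 * (x 3 * (x 2 * (x 1 * x 0))))) * t := by simp [mul_assoc]
      _ = t := by rw [hrev, one_mul]
  simp only [_root_.mul_inv_rev, hinv, mul_assoc]
  simp only [key, key2]
  exact hrev

/-- The images of the generators `a₁, b₁, a₂, b₂` under `ι`. -/
def pentMap : Fin 2 × Bool → GammaP
  | (0, false) => qgen 1 * qgen 0
  | (0, true) => qgen 1 * qgen 2
  | (1, false) => qgen 4 * qgen 3
  | (1, true) => qgen 4 * qgen 5

lemma surfaceRel_two :
    surfaceRel 2 = commF (FreeGroup.of ((1 : Fin 2), false)) (FreeGroup.of ((1 : Fin 2), true)) *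
      commF (FreeGroup.of ((0 : Fin 2), false)) (FreeGroup.of ((0 : Fin 2), true)) := by
  have h : List.finRange 2 = [0, 1] := by decide
  simp [surfaceRel, h]

/-- The embedding `ι : Γ₂ → Γ`, `a₁ ↦ q₂q₁`, `b₁ ↦ q₂q₃`, `a₂ ↦ q₅q₄`, `b₂ ↦ q₅q₆`. -/
def iota : Gamma2 →* GammaP :=
  PresentedGroup.toGroup (f := pentMap) (by
    intro r hr
    rw [Set.mem_singleton_iff] at hr
    subst hr
    rw [surfaceRel_two]
    simp only [commF, _root_.map_mul, _root_.map_inv, FreeGroup.lift_apply_of]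
    have h01 : pentMap ((0 : Fin 2), false) = qgen 1 * qgen 0 := rfl
    have h02 : pentMap ((0 : Fin 2), true) = qgen 1 * qgen 2 := rfl
    have h11 : pentMap ((1 : Fin 2), false) = qgen 4 * qgen 3 := rfl
    have h12 : pentMap ((1 : Fin 2), true) = qgen 4 * qgen 5 := rfl
    rw [h01, h02, h11, h12]
    exact pent_helper (fun i => qgen i) qgen_mul_self qgen_prod)

/-- A pentagon representation: a non-elementary `ρ : Γ₂ → PSL(2,ℂ)` extending to `Γ` with
exactly one `qᵢ` killed. -/
def IsPentagonRep (ρ : Gamma2 →* PSL2C) : Prop :=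
  IsNonElem ρ ∧ ∃ ρ' : GammaP →* PSL2C, ρ'.comp iota = ρ ∧ ∃! i : Fin 6, ρ' (qgen i) = 1

/-- A primitive element of the free group `F₂`: part of a free basis. -/
def IsPrimitiveF2 (γ : FreeGroup (Fin 2)) : Prop :=
  ∃ φ : MulAut (FreeGroup (Fin 2)), φ (FreeGroup.of 0) = γ

/-- `pp` and `pm` are the attracting resp. repelling fixed points of `α`: for a representative
`A ∈ SL(2,ℂ)` with eigenvalues `l, l⁻¹`, `|l| > 1`, they are the corresponding eigenlines. -/
def IsAttrRep (α : PSL2C) (pp pm : P1) : Prop :=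
  ∃ A : SL2C, projPSL A = α ∧ ∃ l : ℂ, 1 < ‖l‖ ∧
    ∃ (v w : Fin 2 → ℂ) (hv : v ≠ 0) (hw : w ≠ 0),
      (A : Matrix (Fin 2) (Fin 2) ℂ) *ᵥ v = l • v ∧
      (A : Matrix (Fin 2) (Fin 2) ℂ) *ᵥ w = l⁻¹ • w ∧
      pp = Projectivization.mk ℂ v hv ∧ pm = Projectivization.mk ℂ w hw

-- chunk 1: matrices and basic center lemmas
open Matrix in
lemma projPSL_out (g : PSL2C) : projPSL (Quotient.out g) = g := Quotient.out_eq g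

open Matrix in
lemma center_pm {z : SL2C} (hz : z ∈ Subgroup.center SL2C) :
    (z : Matrix (Fin 2) (Fin 2) ℂ) = 1 ∨ (z : Matrix (Fin 2) (Fin 2) ℂ) = -1 := by
  obtain ⟨r, hr, hsc⟩ := Matrix.SpecialLinearGroup.mem_center_iff.mp hz
  simp only [Fintype.card_fin] at hr
  have h2 : (r - 1) * (r + 1) = 0 := by ring_nf; linear_combination hr
  rcases mul_eq_zero.mp h2 with h | h
  · left; rw [← hsc, sub_eq_zero.mp h]; simp
  · right; rw [← hsc, eq_neg_of_add_eq_zero_left h]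
    simp [Matrix.scalar_apply]
    ext i j
    by_cases hij : i = j <;> simp [Matrix.diagonal, Matrix.one_apply, hij]
open Matrix in
lemma sl2_mulVec_ne (A : SL2C) {v : Fin 2 → ℂ} (hv : v ≠ 0) :
    (A : Matrix (Fin 2) (Fin 2) ℂ) *ᵥ v ≠ 0 := by
  intro h0
  apply hv
  have := sl2_toLin'_injective A (a₁ := v) (a₂ := 0)
  simp only [Matrix.toLin'_apply, map_zero] at this
  exact this (by simpa using h0)

open Matrix Projectivization in
lemma act_welldef (A B : SL2C) (h : projPSL A = projPSL B) (x : P1) :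
    Projectivization.map (Matrix.toLin' (A : Matrix (Fin 2) (Fin 2) ℂ)) (sl2_toLin'_injective A) x
      = Projectivization.map (Matrix.toLin' (B : Matrix (Fin 2) (Fin 2) ℂ))
        (sl2_toLin'_injective B) x := by
  obtain ⟨z, hz, hAz⟩ := (QuotientGroup.mk'_eq_mk' (N := Subgroup.center SL2C)).mp h
  have hB : (B : Matrix (Fin 2) (Fin 2) ℂ) = (A : Matrix (Fin 2) (Fin 2) ℂ)
      ∨ (B : Matrix (Fin 2) (Fin 2) ℂ) = -(A : Matrix (Fin 2) (Fin 2) ℂ) := by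
    rcases center_pm hz with hc | hc
    · left; rw [← hAz, Matrix.SpecialLinearGroup.coe_mul, hc, mul_one]
    · right; rw [← hAz, Matrix.SpecialLinearGroup.coe_mul, hc, mul_neg_one]
  induction x using Projectivization.ind with
  | h v hv =>
    rw [Projectivization.map_mk, Projectivization.map_mk, Projectivization.mk_eq_mk_iff]
    rcases hB with hB | hB
    · exact ⟨1, by simp [hB]⟩
    · exact ⟨-1, by simp [hB, Matrix.toLin'_apply, Matrix.neg_mulVec]; constructor <;> ring⟩

open Matrix in
lemma pslAct_proj (A : SL2C) (x : P1) :
    pslAct (projPSL A) x =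
      Projectivization.map (Matrix.toLin' (A : Matrix (Fin 2) (Fin 2) ℂ))
        (sl2_toLin'_injective A) x :=
  act_welldef _ _ (projPSL_out _) x

open Matrix in
lemma pslAct_mk (A : SL2C) (v : Fin 2 → ℂ) (hv : v ≠ 0) :
    pslAct (projPSL A) (Projectivization.mk ℂ v hv) =
      Projectivization.mk ℂ ((A : Matrix (Fin 2) (Fin 2) ℂ) *ᵥ v) (sl2_mulVec_ne A hv) := by
  rw [pslAct_proj, Projectivization.map_mk]
  simp_rw [Matrix.toLin'_apply]

open Matrix in
lemma pslAct_mul (a b : PSL2C) (x : P1) : pslAct (a * b) x = pslAct a (pslAct b x) := by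
  obtain ⟨A, rfl⟩ : ∃ A : SL2C, projPSL A = a := ⟨Quotient.out a, projPSL_out a⟩
  obtain ⟨B, rfl⟩ : ∃ B : SL2C, projPSL B = b := ⟨Quotient.out b, projPSL_out b⟩
  rw [← _root_.map_mul]
  induction x using Projectivization.ind with
  | h v hv =>
    rw [pslAct_mk, pslAct_mk, pslAct_mk]
    simp_rw [Matrix.SpecialLinearGroup.coe_mul, Matrix.mulVec_mulVec]

open Matrix in
lemma pslAct_one (x : P1) : pslAct 1 x = x := by
  rw [← _root_.map_one projPSL]
  induction x using Projectivization.ind with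
  | h v hv => rw [pslAct_mk]; congr 1; simp

lemma pslAct_inj (a : PSL2C) : Function.Injective (pslAct a) := by
  intro x y h
  have := congrArg (pslAct a⁻¹) h
  rwa [← pslAct_mul, ← pslAct_mul, inv_mul_cancel, pslAct_one, pslAct_one] at this
open Matrix in
/-- The five real reflection matrices. -/
def Rsl : Fin 5 → Matrix.SpecialLinearGroup (Fin 2) ℝ
  | 0 => ⟨!![0, 1; -1, 0], by norm_num [Matrix.det_fin_two_of]⟩
  | 1 => ⟨!![0, 2; -(1/2), 0], by norm_num [Matrix.det_fin_two_of]⟩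
  | 2 => ⟨!![2, 1; -5, -2], by norm_num [Matrix.det_fin_two_of]⟩
  | 3 => ⟨!![7, 5/2; -20, -7], by norm_num [Matrix.det_fin_two_of]⟩
  | 4 => ⟨!![3, 1; -10, -3], by norm_num [Matrix.det_fin_two_of]⟩

open Matrix in
def toC : Matrix.SpecialLinearGroup (Fin 2) ℝ →* SL2C :=
  Matrix.SpecialLinearGroup.map (n := Fin 2) Complex.ofRealHom

/-- The images of the six generators. -/
def fgen : Fin 6 → PSL2C
  | 0 => projPSL (toC (Rsl 0))
  | 1 => projPSL (toC (Rsl 1))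
  | 2 => projPSL (toC (Rsl 2))
  | 3 => projPSL (toC (Rsl 3))
  | 4 => projPSL (toC (Rsl 4))
  | 5 => 1

open Matrix in
lemma toC_coe (X : Matrix.SpecialLinearGroup (Fin 2) ℝ) :
    (toC X : Matrix (Fin 2) (Fin 2) ℂ) =
      (X : Matrix (Fin 2) (Fin 2) ℝ).map Complex.ofRealHom := rfl

open Matrix in
lemma proj_one_of_neg_one (X : Matrix.SpecialLinearGroup (Fin 2) ℝ)
    (hX : (X : Matrix (Fin 2) (Fin 2) ℝ) = !![-1, 0; 0, -1]) : projPSL (toC X) = 1 := by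
  refine (QuotientGroup.eq_one_iff _).mpr (Matrix.SpecialLinearGroup.mem_center_iff.mpr
    ⟨-1, by norm_num, ?_⟩)
  rw [toC_coe, hX]
  ext i j
  fin_cases i <;> fin_cases j <;>
    simp [Matrix.scalar_apply, Matrix.diagonal, Matrix.map_apply]

open Matrix in
lemma proj_ne_one (X : Matrix.SpecialLinearGroup (Fin 2) ℝ)
    (hX : (X : Matrix (Fin 2) (Fin 2) ℝ) 1 0 ≠ 0) : projPSL (toC X) ≠ 1 := by
  intro h
  obtain ⟨r, -, hsc⟩ := Matrix.SpecialLinearGroup.mem_center_iff.mp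
    ((QuotientGroup.eq_one_iff _).mp h)
  have := congrFun (congrFun hsc 1) 0
  rw [toC_coe] at this
  simp [Matrix.scalar_apply, Matrix.diagonal, Matrix.map_apply] at this
  exact hX (by exact_mod_cast this.symm)
open Matrix in
lemma Rsl_sq (i : Fin 5) : ((Rsl i * Rsl i : Matrix.SpecialLinearGroup (Fin 2) ℝ) :
    Matrix (Fin 2) (Fin 2) ℝ) = !![-1, 0; 0, -1] := by
  fin_cases i <;>
    simp only [Matrix.SpecialLinearGroup.coe_mul] <;>
    simp only [Matrix.SpecialLinearGroup.coe_mul, Rsl, Matrix.mul_fin_two] <;> norm_num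

open Matrix in
lemma Rsl_prod : ((Rsl 0 * Rsl 1 * Rsl 2 * Rsl 3 * Rsl 4 :
    Matrix.SpecialLinearGroup (Fin 2) ℝ) : Matrix (Fin 2) (Fin 2) ℝ) = !![-1, 0; 0, -1] := by
  simp only [Matrix.SpecialLinearGroup.coe_mul]
  simp only [Matrix.SpecialLinearGroup.coe_mul, Rsl, Matrix.mul_fin_two]
  norm_num

open Matrix in
lemma fgen_rels : ∀ r ∈ pentagonRels, (FreeGroup.lift fgen) r = 1 := by
  intro r hr
  rcases hr with ⟨i, rfl⟩ | hr
  · simp only [_root_.map_mul, FreeGroup.lift_apply_of]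
    fin_cases i
    · exact (_root_.map_mul projPSL _ _) ▸ (_root_.map_mul toC _ _) ▸
        proj_one_of_neg_one _ (Rsl_sq 0)
    · exact (_root_.map_mul projPSL _ _) ▸ (_root_.map_mul toC _ _) ▸
        proj_one_of_neg_one _ (Rsl_sq 1)
    · exact (_root_.map_mul projPSL _ _) ▸ (_root_.map_mul toC _ _) ▸
        proj_one_of_neg_one _ (Rsl_sq 2)
    · exact (_root_.map_mul projPSL _ _) ▸ (_root_.map_mul toC _ _) ▸
        proj_one_of_neg_one _ (Rsl_sq 3)
    · exact (_root_.map_mul projPSL _ _) ▸ (_root_.map_mul toC _ _) ▸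
        proj_one_of_neg_one _ (Rsl_sq 4)
    · show fgen 5 * fgen 5 = 1
      simp [fgen]
  · rw [Set.mem_singleton_iff] at hr
    subst hr
    have h6 : List.finRange 6 = [0, 1, 2, 3, 4, 5] := by decide
    rw [h6]
    simp only [List.map, List.prod_cons, List.prod_nil, _root_.map_mul, FreeGroup.lift_apply_of,
      _root_.map_one, mul_one]
    show fgen 0 * (fgen 1 * (fgen 2 * (fgen 3 * (fgen 4 * fgen 5)))) = 1
    have : fgen 0 * (fgen 1 * (fgen 2 * (fgen 3 * (fgen 4 * fgen 5)))) =
        projPSL (toC (Rsl 0 * Rsl 1 * Rsl 2 * Rsl 3 * Rsl 4)) := by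
      simp only [fgen, _root_.map_mul, mul_one, mul_assoc]
    rw [this]
    exact proj_one_of_neg_one _ Rsl_prod

/-- The pentagon representation `ρ' : Γ → PSL(2,ℂ)`. -/
def rhoP : GammaP →* PSL2C := PresentedGroup.toGroup fgen_rels

lemma rhoP_qgen (i : Fin 6) : rhoP (qgen i) = fgen i := PresentedGroup.toGroup.of fgen_rels

lemma lift_fgen_mem (w : FreeGroup (Fin 6)) : FreeGroup.lift fgen w ∈ PSL2R := by
  induction w using FreeGroup.induction_on with
  | C1 => simp only [_root_.map_one]; exact one_mem _
  | of i =>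
    rw [FreeGroup.lift_apply_of]
    fin_cases i
    · exact ⟨Rsl 0, rfl⟩
    · exact ⟨Rsl 1, rfl⟩
    · exact ⟨Rsl 2, rfl⟩
    · exact ⟨Rsl 3, rfl⟩
    · exact ⟨Rsl 4, rfl⟩
    · exact one_mem _
  | inv_of i hi => rw [_root_.map_inv]; exact inv_mem hi
  | mul u v hu hv => rw [_root_.map_mul]; exact mul_mem hu hv

lemma rhoP_mem_PSL2R (x : GammaP) : rhoP x ∈ PSL2R := by
  induction x using QuotientGroup.induction_on with
  | H w => exact lift_fgen_mem w
open Matrix Projectivization in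
lemma e0_ne : (![1, 0] : Fin 2 → ℂ) ≠ 0 := by
  intro h; have := congrFun h 0; simp at this

open Matrix Projectivization in
lemma e1_ne : (![0, 1] : Fin 2 → ℂ) ≠ 0 := by
  intro h; have := congrFun h 1; simp at this

open Matrix Projectivization in
lemma mk_ne_of (i : Fin 2) {u w : Fin 2 → ℂ} (hu : u ≠ 0) (hw : w ≠ 0)
    (h0 : u i = 0) (h1 : w i ≠ 0) :
    Projectivization.mk ℂ u hu ≠ Projectivization.mk ℂ w hw := by
  intro h
  obtain ⟨a, ha⟩ := (Projectivization.mk_eq_mk_iff' ℂ u w hu hw).mp h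
  have hai := congrFun ha i
  simp only [Pi.smul_apply, smul_eq_mul, h0] at hai
  have ha0 : a = 0 := by
    rcases mul_eq_zero.mp hai with h' | h'
    · exact h'
    · exact absurd h' h1
  apply hu
  rw [← ha, ha0]
  simp

open Matrix Projectivization in
/-- Fixed points of a diagonal element with distinct eigenvalues. -/
lemma fixed_of_diag (A : SL2C) (d₀ d₁ : ℂ)
    (hA : (A : Matrix (Fin 2) (Fin 2) ℂ) = Matrix.diagonal ![d₀, d₁]) (hne : d₀ ≠ d₁)
    (x : P1) (hx : pslAct (projPSL A) x = x) :
    x = Projectivization.mk ℂ ![1, 0] e0_ne ∨ x = Projectivization.mk ℂ ![0, 1] e1_ne := by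
  induction x using Projectivization.ind with
  | h v hv =>
    rw [pslAct_mk] at hx
    obtain ⟨a, ha⟩ := (Projectivization.mk_eq_mk_iff' ℂ _ _ _ _).mp hx
    have h0 := congrFun ha 0
    have h1 := congrFun ha 1
    simp only [Pi.smul_apply, smul_eq_mul, hA, Matrix.mulVec, dotProduct,
      Fin.sum_univ_two, Matrix.diagonal_apply, Matrix.cons_val_zero, Matrix.cons_val_one,
      Matrix.head_cons] at h0 h1
    norm_num at h0 h1
    by_cases hv0 : v 0 = 0
    · right
      have hv1 : v 1 ≠ 0 := fun hv1 =>
        hv (funext fun j => by fin_cases j <;> simp [hv0, hv1])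
      rw [Projectivization.mk_eq_mk_iff' ℂ]
      exact ⟨v 1, funext fun j => by fin_cases j <;> simp [hv0]⟩
    · by_cases hv1 : v 1 = 0
      · left
        rw [Projectivization.mk_eq_mk_iff' ℂ]
        exact ⟨v 0, funext fun j => by fin_cases j <;> simp [hv1]⟩
      · exact absurd ((h0.resolve_right hv0).symm.trans (h1.resolve_right hv1)) hne

open Matrix Projectivization in
/-- The square of any element preserving a set of at most two points fixes it pointwise. -/
lemma pslAct_sq_fix {S : Set P1} (hfin : S.Finite) (hcard : S.ncard ≤ 2) (γ : PSL2C)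
    (hinv : pslAct γ '' S = S) {x : P1} (hx : x ∈ S) : pslAct (γ * γ) x = x := by
  have hmem : ∀ y ∈ S, pslAct γ y ∈ S := fun y hy => hinv ▸ Set.mem_image_of_mem _ hy
  rw [pslAct_mul]
  by_cases hfx : pslAct γ x = x
  · rw [hfx, hfx]
  · have hsub : {x, pslAct γ x} ⊆ S := by
      intro z hz
      rcases hz with rfl | hz
      · exact hx
      · rw [Set.mem_singleton_iff] at hz; subst hz; exact hmem x hx
    have hS : {x, pslAct γ x} = S := by
      apply Set.eq_of_subset_of_ncard_le hsub _ hfin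
      rw [Set.ncard_pair (Ne.symm hfx)]
      exact hcard
    have h2 : pslAct γ (pslAct γ x) ∈ S := hmem _ (hmem x hx)
    rw [← hS] at h2
    rcases h2 with h2 | h2
    · exact h2
    · rw [Set.mem_singleton_iff] at h2
      exact absurd (pslAct_inj γ h2) hfx
open Matrix in
def Dsl : Matrix.SpecialLinearGroup (Fin 2) ℝ := Rsl 1 * Rsl 0

open Matrix in
def Nsl : Matrix.SpecialLinearGroup (Fin 2) ℝ := Rsl 1 * Rsl 2

open Matrix in
lemma DD_coe : (toC (Dsl * Dsl) : Matrix (Fin 2) (Fin 2) ℂ) =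
    Matrix.diagonal ![(4 : ℂ), 1/4] := by
  have hD : ((Dsl * Dsl : Matrix.SpecialLinearGroup (Fin 2) ℝ) :
      Matrix (Fin 2) (Fin 2) ℝ) = !![4, 0; 0, 1/4] := by
    simp only [Dsl, Matrix.SpecialLinearGroup.coe_mul]
    simp only [Dsl, Matrix.SpecialLinearGroup.coe_mul, Rsl, Matrix.mul_fin_two]
    norm_num
  rw [toC_coe, hD]
  ext i j
  fin_cases i <;> fin_cases j <;>
    simp [Matrix.map_apply, Matrix.diagonal_apply] <;> norm_num

open Matrix in
lemma Nc_coe : (toC Nsl : Matrix (Fin 2) (Fin 2) ℂ) = !![-10, -4; -1, -1/2] := by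
  have hN : ((Nsl : Matrix.SpecialLinearGroup (Fin 2) ℝ) :
      Matrix (Fin 2) (Fin 2) ℝ) = !![-10, -4; -1, -1/2] := by
    simp only [Nsl, Matrix.SpecialLinearGroup.coe_mul]
    simp only [Nsl, Matrix.SpecialLinearGroup.coe_mul, Rsl, Matrix.mul_fin_two]
    norm_num
  rw [toC_coe, hN]
  ext i j
  fin_cases i <;> fin_cases j <;> simp [Matrix.map_apply] <;> norm_num

lemma iota_a1 : iota a1 = qgen 1 * qgen 0 := PresentedGroup.toGroup.of _
lemma iota_b1 : iota b1 = qgen 1 * qgen 2 := PresentedGroup.toGroup.of _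

lemma rho_a1 : (rhoP.comp iota) a1 = projPSL (toC Dsl) := by
  rw [MonoidHom.comp_apply, iota_a1, _root_.map_mul, rhoP_qgen, rhoP_qgen]
  show projPSL (toC (Rsl 1)) * projPSL (toC (Rsl 0)) = _
  rw [Dsl, _root_.map_mul, _root_.map_mul]

lemma rho_b1 : (rhoP.comp iota) b1 = projPSL (toC Nsl) := by
  rw [MonoidHom.comp_apply, iota_b1, _root_.map_mul, rhoP_qgen, rhoP_qgen]
  show projPSL (toC (Rsl 1)) * projPSL (toC (Rsl 2)) = _
  rw [Nsl, _root_.map_mul, _root_.map_mul]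

open Matrix Projectivization in
lemma no_inv_set :
    ¬ ∃ S : Set P1, S.Nonempty ∧ S.Finite ∧ S.ncard ≤ 2 ∧
      ∀ g ∈ (rhoP.comp iota).range, pslAct g '' S = S := by
  rintro ⟨S, ⟨x, hx⟩, hfin, hcard, hinv⟩
  set ρ := rhoP.comp iota with hρ
  set n : PSL2C := projPSL (toC Nsl) with hn
  set M : PSL2C := projPSL (toC (Dsl * Dsl)) with hM
  have hg : ρ a1 ∈ ρ.range := ⟨a1, rfl⟩
  have hh : ρ (b1 * a1 * b1⁻¹) ∈ ρ.range := ⟨_, rfl⟩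
  have h1 := pslAct_sq_fix hfin hcard _ (hinv _ hg) hx
  have h2 := pslAct_sq_fix hfin hcard _ (hinv _ hh) hx
  have hDD : ρ a1 * ρ a1 = M := by
    rw [rho_a1, hM, _root_.map_mul, _root_.map_mul]
  rw [hDD] at h1
  have hx1 := fixed_of_diag _ 4 (1/4) DD_coe (by norm_num) x h1
  have hHH : ρ (b1 * a1 * b1⁻¹) * ρ (b1 * a1 * b1⁻¹) = n * M * n⁻¹ := by
    rw [_root_.map_mul, _root_.map_mul, _root_.map_inv, rho_a1, rho_b1, ← hn, hM,
      _root_.map_mul, _root_.map_mul]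
    group
  rw [hHH] at h2
  have hxn : pslAct n (pslAct n⁻¹ x) = x := by
    rw [← pslAct_mul, mul_inv_cancel, pslAct_one]
  have hy : pslAct M (pslAct n⁻¹ x) = pslAct n⁻¹ x := by
    apply pslAct_inj n
    rw [← pslAct_mul, ← pslAct_mul, h2, hxn]
  have hx2 := fixed_of_diag _ 4 (1/4) DD_coe (by norm_num) _ hy
  have hv1 : (![-10, -1] : Fin 2 → ℂ) ≠ 0 := fun h => by
    have := congrFun h 0; norm_num at this
  have hv2 : (![-4, -1/2] : Fin 2 → ℂ) ≠ 0 := fun h => by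
    have := congrFun h 0; norm_num at this
  have hximg : x = Projectivization.mk ℂ ![-10, -1] hv1 ∨
      x = Projectivization.mk ℂ ![-4, -1/2] hv2 := by
    rcases hx2 with hy2 | hy2
    · left
      rw [← hxn, hy2, hn, pslAct_mk]
      congr 1
      rw [Nc_coe]
      funext j
      fin_cases j <;> simp [Matrix.mulVec, dotProduct, Fin.sum_univ_two] <;> norm_num
    · right
      rw [← hxn, hy2, hn, pslAct_mk]
      congr 1
      rw [Nc_coe]
      funext j
      fin_cases j <;> simp [Matrix.mulVec, dotProduct, Fin.sum_univ_two] <;> norm_num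
  rcases hx1 with rfl | rfl
  · rcases hximg with h | h
    · exact mk_ne_of 1 e0_ne hv1 (by norm_num) (by norm_num) h
    · exact mk_ne_of 1 e0_ne hv2 (by norm_num) (by norm_num) h
  · rcases hximg with h | h
    · exact mk_ne_of 0 e1_ne hv1 (by norm_num) (by norm_num) h
    · exact mk_ne_of 0 e1_ne hv2 (by norm_num) (by norm_num) h
open Matrix in
def trAbs0 : SL2C → ℝ := fun A => ‖Matrix.trace (A : Matrix (Fin 2) (Fin 2) ℂ)‖

open Matrix in
lemma trAbs0_welldef : ∀ A B : SL2C,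
    @Setoid.r _ (QuotientGroup.leftRel (Subgroup.center SL2C)) A B → trAbs0 A = trAbs0 B := by
  intro A B hAB
  have hz : A⁻¹ * B ∈ Subgroup.center SL2C := (QuotientGroup.leftRel_apply).mp hAB
  have hB : B = A * (A⁻¹ * B) := by group
  show ‖Matrix.trace (A : Matrix (Fin 2) (Fin 2) ℂ)‖ =
    ‖Matrix.trace (B : Matrix (Fin 2) (Fin 2) ℂ)‖
  rcases center_pm hz with hc | hc <;>
    rw [hB, Matrix.SpecialLinearGroup.coe_mul, hc] <;> simp

/-- The absolute value of the trace, well defined and continuous on `PSL(2,ℂ)`. -/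
def absTr : PSL2C → ℝ := Quotient.lift trAbs0 trAbs0_welldef

lemma absTr_proj (A : SL2C) :
    absTr (projPSL A) = ‖Matrix.trace (A : Matrix (Fin 2) (Fin 2) ℂ)‖ := rfl

open Matrix in
lemma trAbs0_continuous : Continuous trAbs0 :=
  continuous_norm.comp (Continuous.matrix_trace continuous_subtype_val)

lemma absTr_continuous : Continuous absTr :=
  Continuous.quotient_lift trAbs0_continuous trAbs0_welldef

open Matrix in
lemma Dc_coe : (toC Dsl : Matrix (Fin 2) (Fin 2) ℂ) =
    Matrix.diagonal ![(-2 : ℂ), -1/2] := by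
  have hD : ((Dsl : Matrix.SpecialLinearGroup (Fin 2) ℝ) : Matrix (Fin 2) (Fin 2) ℝ) =
      !![-2, 0; 0, -1/2] := by
    simp only [Dsl, Matrix.SpecialLinearGroup.coe_mul]
    simp only [Dsl, Matrix.SpecialLinearGroup.coe_mul, Rsl, Matrix.mul_fin_two]
    norm_num
  rw [toC_coe, hD]
  ext i j
  fin_cases i <;> fin_cases j <;>
    simp [Matrix.map_apply, Matrix.diagonal_apply] <;> norm_num

open Matrix in
lemma absTr_pow (m : ℕ) : (2 : ℝ) ^ m ≤ absTr ((projPSL (toC Dsl)) ^ m) + 1 := by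
  rw [← _root_.map_pow, absTr_proj, Matrix.SpecialLinearGroup.coe_pow, Dc_coe,
    Matrix.diagonal_pow, Matrix.trace_diagonal]
  have hsum : ∑ i : Fin 2, (![(-2 : ℂ), -1/2] ^ m) i = (-2 : ℂ) ^ m + (-1/2 : ℂ) ^ m := by
    rw [Fin.sum_univ_two]
    simp [Pi.pow_apply]
  rw [hsum]
  have htri : ‖(-2 : ℂ) ^ m‖ ≤
      ‖(-2 : ℂ) ^ m + (-1/2 : ℂ) ^ m‖ + ‖(-1/2 : ℂ) ^ m‖ := by
    calc ‖(-2 : ℂ) ^ m‖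
        = ‖((-2 : ℂ) ^ m + (-1/2 : ℂ) ^ m) + (-((-1/2 : ℂ) ^ m))‖ := by ring_nf
      _ ≤ _ := by
          refine (norm_add_le _ _).trans ?_
          simp
  have h2 : ‖(-2 : ℂ) ^ m‖ = 2 ^ m := by
    rw [norm_pow]; norm_num
  have h12 : ‖(-1/2 : ℂ) ^ m‖ ≤ 1 := by
    rw [norm_pow]
    have habs : ‖(-1/2 : ℂ)‖ = 1/2 := by norm_num [norm_div]
    rw [habs]
    exact pow_le_one₀ (by norm_num) (by norm_num)
  rw [h2] at htri
  linarith

open Matrix in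
lemma not_compact_closure :
    ¬ IsCompact (closure ((((rhoP.comp iota).range : Subgroup PSL2C) : Set PSL2C))) := by
  intro hK
  set ρ := rhoP.comp iota
  have hbdd : BddAbove (absTr '' closure ((ρ.range : Subgroup PSL2C) : Set PSL2C)) :=
    (hK.image absTr_continuous).bddAbove
  obtain ⟨C, hC⟩ := hbdd
  obtain ⟨m, hm⟩ := pow_unbounded_of_one_lt (R := ℝ) (C + 1) one_lt_two
  have hmem : (projPSL (toC Dsl)) ^ m ∈ (ρ.range : Subgroup PSL2C) := by
    have : projPSL (toC Dsl) ∈ ρ.range := ⟨a1, rho_a1⟩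
    exact pow_mem this m
  have hin : absTr ((projPSL (toC Dsl)) ^ m) ∈
      absTr '' closure ((ρ.range : Subgroup PSL2C) : Set PSL2C) :=
    Set.mem_image_of_mem _ (subset_closure hmem)
  have hle : absTr ((projPSL (toC Dsl)) ^ m) ≤ C := hC hin
  have := absTr_pow m
  linarith
/-- pentagon representations exist: there is `ρ' : Γ → PSL(2,ℂ)` with values in
`PSL(2,ℝ)`, killing `q₆` and no other `qᵢ`, with `ρ' ∘ ι` non-elementary. -/
theorem statement9 :
    ∃ ρ' : GammaP →* PSL2C,
      (∀ x : GammaP, ρ' x ∈ PSL2R) ∧ ρ' (qgen 5) = 1 ∧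
      (∀ i : Fin 6, i ≠ 5 → ρ' (qgen i) ≠ 1) ∧
      IsNonElem (ρ'.comp iota) := by
  refine ⟨rhoP, rhoP_mem_PSL2R, ?_, ?_, ?_⟩
  · rw [rhoP_qgen]; rfl
  · intro i hi
    fin_cases i
    · rw [rhoP_qgen]
      exact proj_ne_one _ (by norm_num [Rsl])
    · rw [rhoP_qgen]
      exact proj_ne_one _ (by norm_num [Rsl])
    · rw [rhoP_qgen]
      exact proj_ne_one _ (by norm_num [Rsl])
    · rw [rhoP_qgen]
      exact proj_ne_one _ (by norm_num [Rsl])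
    · rw [rhoP_qgen]
      exact proj_ne_one _ (by norm_num [Rsl])
    · exact absurd rfl hi
  · intro hel
    rcases hel with ⟨S, hne, hfin, hcard, hinv⟩ | hK
    · exact no_inv_set ⟨S, hne, hfin, hcard, hinv⟩
    · exact not_compact_closure hK
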